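/- For all positive integers r, m, s, the following identity of polynomials in ℚ[t] holds: (s−r−1)·z′(t) + (r+m+1)·(t·z′(t) + r·z(t)) = (−1)^m · ((s−1)!·m!·r·(r+1)/(s+m−1)!) · W(r,m,s)(t). -/

import Mathlib

open Polynomial Finset

/-- `W(r,m,s)(t) = Σ_{j=0}^m (−1)^j C(r+m+1−j, m−j) C(s+m, j) t^{m−j}` as a polynomial in `ℚ[t]`. -/
noncomputable def W (r m s : ℕ) : Polynomial ℚ :=
  ∑ j ∈ range (m + 1),
    C ((-1 : ℚ) ^ j * (Nat.choose (r + m + 1 - j) (m - j) : ℚ) * (Nat.choose (s + m) j : ℚ))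
      * X ^ (m - j)

/-- `z(t) = Σ_{j=0}^m (−1)^j (C(r+j−1,j)·C(m,j)/C(s+j−1,j)) t^j`, the terminating
hypergeometric polynomial `₂F₁(r, −m; s; t)`. -/
noncomputable def z (r m s : ℕ) : Polynomial ℚ :=
  ∑ j ∈ range (m + 1),
    C ((-1 : ℚ) ^ j * (Nat.choose (r + j - 1) j : ℚ) * (Nat.choose m j : ℚ)
        / (Nat.choose (s + j - 1) j : ℚ)) * X ^ j

lemma coeff_z (r m s n : ℕ) :
    (z r m s).coeff n
      = (-1 : ℚ) ^ n * (Nat.choose (r + n - 1) n : ℚ) * (Nat.choose m n : ℚ)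
          / (Nat.choose (s + n - 1) n : ℚ) := by
  unfold z
  rw [finset_sum_coeff]
  simp only [coeff_C_mul, coeff_X_pow, mul_ite, mul_one, mul_zero]
  rw [Finset.sum_ite_eq (range (m + 1)) n]
  by_cases h : n ∈ range (m + 1)
  · simp [h]
  · have hn : m < n := by simpa using h
    simp [h, Nat.choose_eq_zero_of_lt hn]

lemma coeff_W (r m s n : ℕ) (hn : n ≤ m) :
    (W r m s).coeff n
      = (-1 : ℚ) ^ (m - n) * (Nat.choose (r + n + 1) n : ℚ) * (Nat.choose (s + m) (m - n) : ℚ) := by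
  unfold W
  rw [finset_sum_coeff]
  simp only [coeff_C_mul, coeff_X_pow, mul_ite, mul_one, mul_zero]
  rw [Finset.sum_eq_single (m - n)]
  · have h1 : n = m - (m - n) := by omega
    have h2 : r + m + 1 - (m - n) = r + n + 1 := by omega
    have h3 : m - (m - n) = n := by omega
    rw [if_pos h1, h2, h3]
  · intro j hj hne
    have : ¬ (n = m - j) := by
      simp only [mem_range] at hj; omega
    simp [this]
  · intro h
    exact absurd (by simp : m - n ∈ range (m + 1)) h

lemma coeff_W_of_gt (r m s n : ℕ) (hn : m < n) : (W r m s).coeff n = 0 := by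
  unfold W
  rw [finset_sum_coeff]
  apply Finset.sum_eq_zero
  intro j hj
  have h : ¬ (n = m - j) := by omega
  rw [coeff_C_mul, coeff_X_pow, if_neg h, mul_zero]

lemma coeff_X_mul_der (p : Polynomial ℚ) (n : ℕ) :
    (X * derivative p).coeff n = n * p.coeff n := by
  cases n with
  | zero => simp [mul_coeff_zero]
  | succ k => rw [coeff_X_mul, coeff_derivative]; push_cast; ring

/-- Lemma 1:
`(s−r−1)·z′ + (r+m+1)·(t·z′ + r·z) = (−1)^m ((s−1)!·m!·r·(r+1)/(s+m−1)!) · W(r,m,s)`. -/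
theorem statement0 (r m s : ℕ) (hr : 0 < r) (hm : 0 < m) (hs : 0 < s) :
    C ((s : ℚ) - r - 1) * derivative (z r m s)
      + C ((r : ℚ) + m + 1) * (X * derivative (z r m s) + C (r : ℚ) * z r m s)
    = C ((-1 : ℚ) ^ m *
        ((Nat.factorial (s - 1) : ℚ) * (Nat.factorial m : ℚ) * r * (r + 1)
          / (Nat.factorial (s + m - 1) : ℚ))) * W r m s := by

  obtain ⟨r, rfl⟩ : ∃ r', r = r' + 1 := ⟨r - 1, by omega⟩
  obtain ⟨s, rfl⟩ : ∃ s', s = s' + 1 := ⟨s - 1, by omega⟩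
  ext n
  simp only [coeff_add, coeff_C_mul, coeff_X_mul_der, coeff_derivative, coeff_z]
  by_cases hnm : n ≤ m
  · rw [coeff_W _ _ _ _ hnm]
    -- index normalizations
    have e1 : r + 1 + n - 1 = r + n := by omega
    have e2 : r + 1 + (n + 1) - 1 = r + (n + 1) := by omega
    have e3 : s + 1 + n - 1 = s + n := by omega
    have e4 : s + 1 + (n + 1) - 1 = s + (n + 1) := by omega
    have e5 : s + 1 + m - 1 = s + m := by omega
    have e6 : s + 1 - 1 = s := by omega
    have e7 : r + 1 + n + 1 = r + n + 2 := by omega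
    rw [e1, e2, e3, e4, e5, e6, e7]
    -- replace choose m (n+1)
    have hne : ((n : ℚ) + 1) ≠ 0 := by positivity
    have hM : (Nat.choose m (n + 1) : ℚ)
        = (Nat.choose m n : ℚ) * ((m : ℚ) - n) / ((n : ℚ) + 1) := by
      rw [eq_div_iff hne]
      have h := Nat.choose_succ_right_eq m n
      have h2 := congrArg (fun x : ℕ => (x : ℚ)) h
      push_cast [Nat.cast_sub hnm] at h2
      linarith [h2]
    rw [hM]
    -- cast all chooses to factorials
    rw [Nat.cast_choose ℚ (show n ≤ r + n by omega),
        Nat.cast_choose ℚ (show n + 1 ≤ r + (n + 1) by omega),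
        Nat.cast_choose ℚ (show n ≤ s + n by omega),
        Nat.cast_choose ℚ (show n + 1 ≤ s + (n + 1) by omega),
        Nat.cast_choose ℚ (show n ≤ m by omega),
        Nat.cast_choose ℚ (show n ≤ r + n + 2 by omega),
        Nat.cast_choose ℚ (show m - n ≤ s + 1 + m by omega)]
    -- simplify subtraction indices
    rw [show r + n - n = r by omega, show r + (n + 1) - (n + 1) = r by omega,
        show s + n - n = s by omega, show s + (n + 1) - (n + 1) = s by omega,
        show r + n + 2 - n = r + 2 by omega,
        show s + 1 + m - (m - n) = s + n + 1 by omega]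
    -- expand factorials toward atoms
    rw [show r + (n + 1) = (r + n) + 1 by omega, show s + (n + 1) = (s + n) + 1 by omega,
        show r + n + 2 = (r + n) + 1 + 1 by omega, show r + 2 = r + 1 + 1 by omega,
        show s + 1 + m = (s + m) + 1 by omega]
    simp only [Nat.factorial_succ]
    push_cast
    -- handle signs
    have hsgn : ((-1 : ℚ)) ^ m = (-1 : ℚ) ^ (m - n) * (-1 : ℚ) ^ n := by
      rw [← pow_add]; congr 1; omega
    rw [hsgn, pow_succ]
    have k1 : ((Nat.factorial n : ℚ)) ≠ 0 := Nat.cast_ne_zero.mpr (Nat.factorial_ne_zero n)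
    have k2 : ((Nat.factorial m : ℚ)) ≠ 0 := Nat.cast_ne_zero.mpr (Nat.factorial_ne_zero m)
    have k3 : ((Nat.factorial (m - n) : ℚ)) ≠ 0 := Nat.cast_ne_zero.mpr (Nat.factorial_ne_zero _)
    have k4 : ((Nat.factorial r : ℚ)) ≠ 0 := Nat.cast_ne_zero.mpr (Nat.factorial_ne_zero r)
    have k5 : ((Nat.factorial s : ℚ)) ≠ 0 := Nat.cast_ne_zero.mpr (Nat.factorial_ne_zero s)
    have k6 : ((Nat.factorial (r + n) : ℚ)) ≠ 0 := Nat.cast_ne_zero.mpr (Nat.factorial_ne_zero _)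
    have k7 : ((Nat.factorial (s + n) : ℚ)) ≠ 0 := Nat.cast_ne_zero.mpr (Nat.factorial_ne_zero _)
    have k8 : ((Nat.factorial (s + m) : ℚ)) ≠ 0 := Nat.cast_ne_zero.mpr (Nat.factorial_ne_zero _)
    rcases Nat.even_or_odd (m - n) with h | h <;>
      simp only [h.neg_one_pow] <;>
      field_simp <;>
      ring
  · have h1 : Nat.choose m n = 0 := Nat.choose_eq_zero_of_lt (by omega)
    have h2 : Nat.choose m (n + 1) = 0 := Nat.choose_eq_zero_of_lt (by omega)
    rw [coeff_W_of_gt _ _ _ _ (by omega), h1, h2]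
    simp
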